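/- Let X ⊆ ℝ^s be compact, f : X → ℝ^p continuous, and let ξ be a Borel probability measure on X with M(ξ) = ∫_X f(x) f(x)ᵀ dξ(x) positive definite. If there exists x_0 ∈ X with f(x_0)ᵀ M(ξ)⁻¹ f(x_0) > p, then there exists α ∈ (0,1) such that det M( (1−α)·ξ + α·δ_{x_0} ) > det M(ξ), where δ_{x_0} is the Dirac measure at x_0. -/

import Mathlib

open Matrix MeasureTheory Topology Filter

/-- Information matrix `M(ξ) = ∫ f(x) f(x)ᵀ dξ(x)` of a design `ξ` on `X`. -/
noncomputable def infoM {s p : ℕ} {X : Set (Fin s → ℝ)} (f : X → Fin p → ℝ)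
    (ξ : Measure X) : Matrix (Fin p) (Fin p) ℝ :=
  Matrix.of fun i j => ∫ x, f x i * f x j ∂ξ

/-- Matrix determinant lemma, dot-product form. -/
lemma aux_det_lemma {p : ℕ} (A : Matrix (Fin p) (Fin p) ℝ) (hA : IsUnit A.det)
    (u v : Fin p → ℝ) :
    (A + replicateCol Unit u * replicateRow Unit v).det = A.det * (1 + v ⬝ᵥ A⁻¹ *ᵥ u) := by
  rw [det_add_replicateCol_mul_replicateRow hA]
  congr 1
  rw [det_unique]
  simp [Matrix.mul_apply, Matrix.mulVec, dotProduct, Finset.mul_sum, Finset.sum_mul]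
  rw [Finset.sum_comm]
  exact Finset.sum_congr rfl fun i _ => Finset.sum_congr rfl fun j _ => by ring

/-- Analytic step: for `d > p ≥ 1`, for small `α > 0` one has
`(1-α)^(p-1) * (1 - α + α d) > 1`. -/
lemma aux_analysis (p : ℕ) (hp : 1 ≤ p) (d : ℝ) (hd : (p : ℝ) < d) :
    ∃ α ∈ Set.Ioo (0 : ℝ) 1, 1 < (1 - α) ^ (p - 1) * (1 - α + α * d) := by
  set h : ℝ → ℝ := fun α => (1 - α) ^ (p - 1) * (1 - α + α * d) with hh
  have h0 : h 0 = 1 := by simp [hh]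
  have hderiv : HasDerivAt h (d - p) 0 := by
    have hg : HasDerivAt (fun α : ℝ => 1 - α) (-1) 0 := by
      simpa using (hasDerivAt_id (0:ℝ)).const_sub 1
    have h1 : HasDerivAt (fun α : ℝ => (1 - α) ^ (p - 1))
        (((p : ℝ) - 1) * (1:ℝ) ^ (p - 1 - 1) * (-1)) 0 := by
      have := hg.fun_pow (p - 1)
      simpa [Nat.cast_sub hp] using this
    have h2 : HasDerivAt (fun α : ℝ => 1 - α + α * d) (-1 + d) 0 := by
      simpa using hg.fun_add ((hasDerivAt_id (0:ℝ)).mul_const d)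
    have := h1.fun_mul h2
    simpa [hh] using this.congr_deriv (by ring)
  rw [hasDerivAt_iff_tendsto_slope] at hderiv
  have hmono : 𝓝[>] (0:ℝ) ≤ 𝓝[≠] (0:ℝ) :=
    nhdsWithin_mono 0 fun x hx => ne_of_gt hx
  have h1 : ∀ᶠ α in 𝓝[>] (0:ℝ), 0 < slope h 0 α :=
    (hderiv.mono_left hmono).eventually (eventually_gt_nhds (by linarith))
  have h2 : ∀ᶠ α in 𝓝[>] (0:ℝ), α ∈ Set.Ioo (0:ℝ) 1 :=
    Ioo_mem_nhdsGT_of_mem (by constructor <;> norm_num)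
  obtain ⟨α, hslope, hαIoo⟩ := (h1.and h2).exists
  refine ⟨α, hαIoo, ?_⟩
  have hα0 : 0 < α := hαIoo.1
  rw [slope_def_field, h0] at hslope
  have : 0 < (h α - 1) / (α - 0) := hslope
  rw [sub_zero] at this
  have := (div_pos_iff.mp this)
  rcases this with ⟨h3, _⟩ | ⟨_, h4⟩
  · have : 1 < h α := by linarith
    simpa [hh] using this
  · linarith

/-- Improvement-step guarantee of the first-order exchange algorithm: if a design `ξ`
with positive definite information matrix fails the D-optimality equivalence condition
at a point `x₀` (i.e. `f(x₀)ᵀ M(ξ)⁻¹ f(x₀) > p`), then mixing a small mass `α` at `x₀`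
strictly increases the determinant of the information matrix. -/
theorem stmt13 {s p : ℕ} (X : Set (Fin s → ℝ)) (hX : IsCompact X)
    (f : X → Fin p → ℝ) (hf : Continuous f)
    (ξ : Measure X) [IsProbabilityMeasure ξ]
    (hM : (infoM f ξ).PosDef)
    (x0 : X) (hx0 : (p : ℝ) < f x0 ⬝ᵥ (infoM f ξ)⁻¹ *ᵥ f x0) :
    ∃ α ∈ Set.Ioo (0 : ℝ) 1,
      (infoM f ξ).det <
        (infoM f (ENNReal.ofReal (1 - α) • ξ +
          ENNReal.ofReal α • Measure.dirac x0)).det := by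
  have hcs : CompactSpace X := isCompact_iff_compactSpace.mp hX
  have hp : 1 ≤ p := by
    rcases Nat.eq_zero_or_pos p with rfl | h
    · simp [dotProduct] at hx0
    · exact h
  set M := infoM f ξ with hMdef
  set v := f x0 with hv
  set d := v ⬝ᵥ M⁻¹ *ᵥ v with hd
  -- integrability
  have hcont : ∀ i j, Continuous fun x => f x i * f x j := fun i j =>
    ((continuous_apply i).comp hf).mul ((continuous_apply j).comp hf)
  have hint : ∀ i j, Integrable (fun x => f x i * f x j) ξ := by
    intro i j
    obtain ⟨C, hC⟩ := isCompact_univ.exists_bound_of_continuousOn (hcont i j).continuousOn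
    exact (integrable_const C).mono' (hcont i j).aestronglyMeasurable
      (Filter.Eventually.of_forall fun x => hC x trivial)
  have hdint : ∀ i j, Integrable (fun x => f x i * f x j) (Measure.dirac x0) := by
    intro i j
    refine ⟨(hcont i j).aestronglyMeasurable, ?_⟩
    rw [HasFiniteIntegral]
    rw [lintegral_dirac]
    exact ENNReal.coe_lt_top
  obtain ⟨α, hαIoo, hgt⟩ := aux_analysis p hp d hx0
  obtain ⟨hα0, hα1⟩ := hαIoo
  have h1α : (0:ℝ) < 1 - α := by linarith
  refine ⟨α, ⟨hα0, hα1⟩, ?_⟩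
  -- compute the new information matrix
  have key : infoM f (ENNReal.ofReal (1 - α) • ξ + ENNReal.ofReal α • Measure.dirac x0)
      = (1 - α) • (M + replicateCol Unit ((α / (1 - α)) • v) * replicateRow Unit v) := by
    ext i j
    show (∫ x, f x i * f x j ∂(ENNReal.ofReal (1 - α) • ξ + ENNReal.ofReal α • Measure.dirac x0))
      = _
    rw [integral_add_measure ((hint i j).smul_measure ENNReal.ofReal_ne_top)
      ((hdint i j).smul_measure ENNReal.ofReal_ne_top),
      integral_smul_measure, integral_smul_measure, integral_dirac,
      ENNReal.toReal_ofReal h1α.le, ENNReal.toReal_ofReal hα0.le]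
    have : M i j = ∫ x, f x i * f x j ∂ξ := rfl
    simp only [Matrix.smul_apply, Matrix.add_apply, Matrix.mul_apply, Finset.univ_unique,
      Finset.sum_singleton, Matrix.replicateCol_apply, Matrix.replicateRow_apply, Pi.smul_apply, smul_eq_mul,
      ← this, ← hv]
    field_simp
  rw [key, det_smul, aux_det_lemma M hM.det_pos.ne'.isUnit]
  rw [Matrix.mulVec_smul, dotProduct_smul, smul_eq_mul, ← hd]
  have hdet : 0 < M.det := hM.det_pos
  have hpow : (1 - α) ^ (Fintype.card (Fin p)) * (M.det * (1 + α / (1 - α) * d))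
      = ((1 - α) ^ (p - 1) * (1 - α + α * d)) * M.det := by
    rw [Fintype.card_fin]
    have hps : (1 - α) ^ p = (1 - α) ^ (p - 1) * (1 - α) := by
      conv_lhs => rw [← Nat.sub_add_cancel hp]
      rw [pow_succ]
    rw [hps]
    field_simp
  rw [hpow]
  calc M.det = 1 * M.det := (one_mul _).symm
    _ < ((1 - α) ^ (p - 1) * (1 - α + α * d)) * M.det :=
      mul_lt_mul_of_pos_right hgt hdet
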